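/- arXiv:1105.1517 — 3 statements merged into one kernel-verified Lean document; each statement's English description precedes it below -/
import Mathlib

section
/- Suppose Σ and Σ' are両 both HOSVD core tensors of the same tensor Ψ, i.e., Ψ = (⊗ₙ U⁽ⁿ⁾)Σ = (⊗ₙ V⁽ⁿ⁾)Σ' with all U⁽ⁿ⁾, V⁽ⁿ⁾ unitary and both Σ, Σ' all-orthogonal with ordered mode-n singular values. Then for every n and every i, ‖Σ_{i_n=i}‖ = ‖Σ'_{i_n=i}‖; that is, the mode-n singular values σᵢ⁽ⁿ⁾ of Ψ are uniquely determined. -/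
open Matrix BigOperators

noncomputable section

/-- The full Kronecker (tensor) product `⊗ₙ U⁽ⁿ⁾` of the local matrices, as a matrix
on the product index set. -/
def kronFull {N : ℕ} {I : Fin N → ℕ} (U : ∀ n, Matrix (Fin (I n)) (Fin (I n)) ℂ) :
    Matrix (∀ n, Fin (I n)) (∀ n, Fin (I n)) ℂ :=
  Matrix.of fun x y => ∏ n, U n (x n) (y n)

/-- The action of a local operator `⊗ₙ U⁽ⁿ⁾` on a tensor `T ∈ ℂ^{I₁}⊗⋯⊗ℂ^{I_N}`. -/
def locAct {N : ℕ} {I : Fin N → ℕ} (U : ∀ n, Matrix (Fin (I n)) (Fin (I n)) ℂ)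
    (T : (∀ n, Fin (I n)) → ℂ) : (∀ n, Fin (I n)) → ℂ :=
  fun x => ∑ y : ∀ n, Fin (I n), (∏ n, U n (x n) (y n)) * T y

/-- Assemble a full multi-index from the value `i` of the `n`-th index and the values
`c` of the remaining indices. -/
def assemble {N : ℕ} {I : Fin N → ℕ} (n : Fin N) (i : Fin (I n))
    (c : ∀ k : {k : Fin N // k ≠ n}, Fin (I k.1)) : ∀ m, Fin (I m) :=
  fun m => if h : m = n then cast (show Fin (I n) = Fin (I m) by rw [h]) i else c ⟨m, h⟩

/-- The mode-`n` matrix unfolding of a tensor (columns indexed by the remaining indices). -/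
def unfold {N : ℕ} {I : Fin N → ℕ} (n : Fin N) (T : (∀ m, Fin (I m)) → ℂ) :
    Matrix (Fin (I n)) (∀ k : {k : Fin N // k ≠ n}, Fin (I k.1)) ℂ :=
  Matrix.of fun i c => T (assemble n i c)

/-- The Hermitian inner product `⟨T_{i_n=i}, T'_{i_n=j}⟩` of mode-`n` slices. -/
def modeInner {N : ℕ} {I : Fin N → ℕ} (n : Fin N) (T T' : (∀ m, Fin (I m)) → ℂ)
    (i j : Fin (I n)) : ℂ :=
  ∑ c : ∀ k : {k : Fin N // k ≠ n}, Fin (I k.1),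
    star (T (assemble n i c)) * T' (assemble n j c)

/-- `T` is all-orthogonal with ordered mode-`n` singular values `σ n`. -/
def AllOrth {N : ℕ} {I : Fin N → ℕ} (σ : ∀ n, Fin (I n) → ℝ)
    (T : (∀ m, Fin (I m)) → ℂ) : Prop :=
  (∀ n, Antitone (σ n)) ∧ (∀ n i, 0 ≤ σ n i) ∧
    ∀ n i j, modeInner n T T i j = if i = j then ((σ n i : ℂ)) ^ 2 else 0

/-- Squared Frobenius norm of a tensor. -/
def fnormSq {N : ℕ} {I : Fin N → ℕ} (T : (∀ m, Fin (I m)) → ℂ) : ℝ :=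
  ∑ x, Complex.normSq (T x)

namespace Stmt7Aux

variable {N : ℕ} {I : Fin N → ℕ}

lemma assemble_same (n : Fin N) (i : Fin (I n)) (c : ∀ k : {k : Fin N // k ≠ n}, Fin (I k.1)) :
    assemble n i c n = i := by simp [assemble]

lemma assemble_ne (n : Fin N) (i : Fin (I n)) (c : ∀ k : {k : Fin N // k ≠ n}, Fin (I k.1))
    {m : Fin N} (h : m ≠ n) : assemble n i c m = c ⟨m, h⟩ := by simp [assemble, h]

lemma assemble_eta (n : Fin N) (y : ∀ m, Fin (I m)) :
    assemble n (y n) (fun k => y k.1) = y := by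
  funext m
  by_cases h : m = n
  · subst h; simp [assemble]
  · simp [assemble, h]

def splitEquiv (n : Fin N) :
    (Fin (I n) × ∀ k : {k : Fin N // k ≠ n}, Fin (I k.1)) ≃ (∀ m, Fin (I m)) where
  toFun pd := assemble n pd.1 pd.2
  invFun y := (y n, fun k => y k.1)
  left_inv := by
    rintro ⟨i, c⟩
    refine Prod.ext (assemble_same n i c) ?_
    funext k
    exact assemble_ne n i c k.2
  right_inv y := assemble_eta n y

lemma prod_split {M : Type*} [CommMonoid M] (n : Fin N) (f : Fin N → M) :
    ∏ m, f m = f n * ∏ k : {k : Fin N // k ≠ n}, f k.1 := by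
  rw [Fintype.prod_eq_mul_prod_compl n f]
  congr 1
  refine Finset.prod_subtype _ (fun x => ?_) f
  simp


def restKron (n : Fin N) (U : ∀ k, Matrix (Fin (I k)) (Fin (I k)) ℂ) :
    Matrix (∀ k : {k : Fin N // k ≠ n}, Fin (I k.1)) (∀ k : {k : Fin N // k ≠ n}, Fin (I k.1)) ℂ :=
  Matrix.of fun c d => ∏ k, U k.1 (c k) (d k)

lemma restKron_unitary (n : Fin N) (U : ∀ k, Matrix (Fin (I k)) (Fin (I k)) ℂ)
    (hU : ∀ k, U k ∈ Matrix.unitaryGroup (Fin (I k)) ℂ) :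
    star (restKron n U) * restKron n U = 1 := by
  ext d d'
  rw [Matrix.mul_apply]
  calc ∑ c, star (restKron n U) d c * restKron n U c d'
      = ∑ c : ∀ k : {k : Fin N // k ≠ n}, Fin (I k.1),
          ∏ k, (star (U k.1 (c k) (d k)) * U k.1 (c k) (d' k)) := by
        refine Finset.sum_congr rfl fun c _ => ?_
        simp [restKron, Matrix.star_apply, Finset.prod_mul_distrib, star_prod]
    _ = ∏ k : {k : Fin N // k ≠ n}, ∑ x, star (U k.1 x (d k)) * U k.1 x (d' k) := by
        rw [Finset.prod_univ_sum]
        rw [Fintype.piFinset_univ]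
    _ = ∏ k : {k : Fin N // k ≠ n}, (1 : Matrix (Fin (I k.1)) (Fin (I k.1)) ℂ) (d k) (d' k) := by
        refine Finset.prod_congr rfl fun k _ => ?_
        have h := Matrix.mem_unitaryGroup_iff'.mp (hU k.1)
        calc ∑ x, star (U k.1 x (d k)) * U k.1 x (d' k)
            = (star (U k.1) * U k.1) (d k) (d' k) := by
              rw [Matrix.mul_apply]
              exact Finset.sum_congr rfl fun x _ => by rw [Matrix.star_apply]
          _ = _ := by rw [h]
    _ = (1 : Matrix _ _ ℂ) d d' := by
        by_cases h : d = d'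
        · subst h; simp
        · rw [Matrix.one_apply_ne h]
          obtain ⟨k, hk⟩ : ∃ k, d k ≠ d' k := by
            by_contra hc
            push_neg at hc
            exact h (funext hc)
          exact Finset.prod_eq_zero (Finset.mem_univ k) (Matrix.one_apply_ne hk)


lemma unfold_locAct (n : Fin N) (U : ∀ k, Matrix (Fin (I k)) (Fin (I k)) ℂ)
    (T : (∀ m, Fin (I m)) → ℂ) :
    unfold n (locAct U T) = U n * (unfold n T * (restKron n U)ᵀ) := by
  ext i c
  show locAct U T (assemble n i c) = _
  rw [locAct]
  rw [← Equiv.sum_comp (splitEquiv n)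
    (fun y => (∏ m, U m (assemble n i c m) (y m)) * T y)]
  rw [Fintype.sum_prod_type]
  rw [Matrix.mul_apply]
  refine Finset.sum_congr rfl fun p _ => ?_
  rw [Matrix.mul_apply, Finset.mul_sum]
  refine Finset.sum_congr rfl fun d _ => ?_
  show (∏ m, U m (assemble n i c m) (assemble n p d m)) * T (assemble n p d) = _
  rw [prod_split n, assemble_same, assemble_same]
  have hrest : (∏ k : {k : Fin N // k ≠ n},
      U k.1 (assemble n i c k.1) (assemble n p d k.1)) = ∏ k, U k.1 (c k) (d k) := by
    refine Finset.prod_congr rfl fun k _ => ?_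
    rw [assemble_ne n i c k.2, assemble_ne n p d k.2]
  rw [hrest]
  show U n i p * (∏ k : {k : Fin N // k ≠ n}, U k.1 (c k) (d k)) * T (assemble n p d)
      = U n i p * (unfold n T p d * (restKron n U)ᵀ d c)
  rw [Matrix.transpose_apply]
  show _ = U n i p * (T (assemble n p d) * ∏ k, U k.1 (c k) (d k))
  ring

lemma gram_of_allOrth (n : Fin N) {σ : ∀ n, Fin (I n) → ℝ} {T : (∀ m, Fin (I m)) → ℂ}
    (h : AllOrth σ T) :
    unfold n T * (unfold n T)ᴴ = Matrix.diagonal (fun p => ((σ n p : ℂ)) ^ 2) := by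
  ext p q
  rw [Matrix.mul_apply]
  have key : ∑ c, unfold n T p c * (unfold n T)ᴴ c q = modeInner n T T q p := by
    rw [modeInner]
    refine Finset.sum_congr rfl fun c _ => ?_
    rw [Matrix.conjTranspose_apply]
    show T (assemble n p c) * star (T (assemble n q c)) = _
    ring
  rw [key, h.2.2 n q p]
  by_cases hpq : p = q
  · subst hpq; simp
  · rw [if_neg (Ne.symm hpq), Matrix.diagonal_apply_ne _ hpq]

lemma gram_locAct (n : Fin N) (U : ∀ k, Matrix (Fin (I k)) (Fin (I k)) ℂ)
    (hU : ∀ k, U k ∈ Matrix.unitaryGroup (Fin (I k)) ℂ) (T : (∀ m, Fin (I m)) → ℂ) :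
    unfold n (locAct U T) * (unfold n (locAct U T))ᴴ
      = U n * (unfold n T * (unfold n T)ᴴ) * (U n)ᴴ := by
  have h := restKron_unitary n U hU
  have hB : (restKron n U)ᵀ * ((restKron n U)ᵀ)ᴴ = 1 := by
    ext d d'
    calc ((restKron n U)ᵀ * ((restKron n U)ᵀ)ᴴ) d d'
        = (star (restKron n U) * restKron n U) d' d := by
          rw [Matrix.mul_apply, Matrix.mul_apply]
          refine Finset.sum_congr rfl fun c _ => ?_
          rw [Matrix.transpose_apply, Matrix.conjTranspose_apply, Matrix.transpose_apply,
            Matrix.star_apply]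
          ring
      _ = (1 : Matrix _ _ ℂ) d' d := by rw [h]
      _ = (1 : Matrix _ _ ℂ) d d' := by
          by_cases hdd : d = d'
          · subst hdd; rfl
          · rw [Matrix.one_apply_ne hdd, Matrix.one_apply_ne (Ne.symm hdd)]
  rw [unfold_locAct, Matrix.conjTranspose_mul, Matrix.conjTranspose_mul]
  simp only [Matrix.mul_assoc]
  rw [← Matrix.mul_assoc ((restKron n U)ᵀ), hB, Matrix.one_mul]

lemma antitone_eq_of_multiset {m : ℕ} {f g : Fin m → ℝ} (hf : Antitone f) (hg : Antitone g)
    (h : Multiset.map f Finset.univ.val = Multiset.map g Finset.univ.val) : f = g := by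
  haveI : IsAntisymm ℝ (· ≥ ·) := ⟨fun a b h1 h2 => le_antisymm h2 h1⟩
  apply List.ofFn_injective
  rw [Fin.univ_val_map, Fin.univ_val_map] at h
  have hperm : List.Perm (List.ofFn f) (List.ofFn g) := Multiset.coe_eq_coe.mp h
  refine List.Perm.eq_of_sortedGE ?_ ?_ hperm
  · exact hf.sortedGE_ofFn
  · exact hg.sortedGE_ofFn

lemma det_conj_diag {m : ℕ} (x : ℂ) (W : Matrix (Fin m) (Fin m) ℂ)
    (hW : W ∈ Matrix.unitaryGroup (Fin m) ℂ) (d : Fin m → ℂ) :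
    Matrix.det (x • (1 : Matrix (Fin m) (Fin m) ℂ) - W * Matrix.diagonal d * Wᴴ)
      = ∏ p, (x - d p) := by
  have hWW : W * Wᴴ = 1 := by
    have h := Matrix.mem_unitaryGroup_iff.mp hW
    rwa [Matrix.star_eq_conjTranspose] at h
  have hsm : W * (x • (1 : Matrix (Fin m) (Fin m) ℂ)) * Wᴴ = x • 1 := by
    rw [mul_smul_comm, Matrix.mul_one, smul_mul_assoc, hWW]
  have hdets : W.det * Wᴴ.det = 1 := by
    rw [← Matrix.det_mul, hWW, Matrix.det_one]
  calc (x • (1 : Matrix (Fin m) (Fin m) ℂ) - W * Matrix.diagonal d * Wᴴ).det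
      = (W * (x • 1 - Matrix.diagonal d) * Wᴴ).det := by
        rw [Matrix.mul_sub, Matrix.sub_mul, hsm]
    _ = W.det * (x • 1 - Matrix.diagonal d).det * Wᴴ.det := by
        rw [Matrix.det_mul, Matrix.det_mul]
    _ = (x • 1 - Matrix.diagonal d).det * (W.det * Wᴴ.det) := by ring
    _ = (x • 1 - Matrix.diagonal d).det := by rw [hdets, mul_one]
    _ = ∏ p, (x - d p) := by
        rw [Matrix.smul_one_eq_diagonal, Matrix.diagonal_sub, Matrix.det_diagonal]

end Stmt7Aux

open Stmt7Aux in
/-- If `Σ` and `Σ'` are both HOSVD core tensors of the same tensor `Ψ`, then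
their mode-`n` singular values coincide: the `σᵢ⁽ⁿ⁾` of `Ψ` are uniquely determined. -/
theorem stmt7 {N : ℕ} {I : Fin N → ℕ} (Ψ T T' : (∀ n, Fin (I n)) → ℂ)
    (U V : ∀ n, Matrix (Fin (I n)) (Fin (I n)) ℂ)
    (hU : ∀ n, U n ∈ Matrix.unitaryGroup (Fin (I n)) ℂ)
    (hV : ∀ n, V n ∈ Matrix.unitaryGroup (Fin (I n)) ℂ)
    (hT : Ψ = locAct U T) (hT' : Ψ = locAct V T')
    (σ σ' : ∀ n, Fin (I n) → ℝ)
    (hσ : AllOrth σ T) (hσ' : AllOrth σ' T') :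
    ∀ (n : Fin N) (i : Fin (I n)), σ n i = σ' n i := by
  obtain ⟨hσa, hσnn, hσd⟩ := hσ
  obtain ⟨hσ'a, hσ'nn, hσ'd⟩ := hσ'
  intro n i
  have h1 : unfold n Ψ * (unfold n Ψ)ᴴ
      = U n * Matrix.diagonal (fun p => ((σ n p : ℂ)) ^ 2) * (U n)ᴴ := by
    rw [hT, gram_locAct n U hU T, gram_of_allOrth n ⟨hσa, hσnn, hσd⟩]
  have h2 : unfold n Ψ * (unfold n Ψ)ᴴ
      = V n * Matrix.diagonal (fun p => ((σ' n p : ℂ)) ^ 2) * (V n)ᴴ := by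
    rw [hT', gram_locAct n V hV T', gram_of_allOrth n ⟨hσ'a, hσ'nn, hσ'd⟩]
  have key : ∀ x : ℂ, ∏ p, (x - ((σ n p : ℂ)) ^ 2) = ∏ p, (x - ((σ' n p : ℂ)) ^ 2) := by
    intro x
    rw [← det_conj_diag x (U n) (hU n), ← det_conj_diag x (V n) (hV n), ← h1, ← h2]
  have hpoly : (∏ p, (Polynomial.X - Polynomial.C (((σ n p : ℂ)) ^ 2)))
      = ∏ p, (Polynomial.X - Polynomial.C (((σ' n p : ℂ)) ^ 2)) := by
    apply Polynomial.funext
    intro x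
    simpa [Polynomial.eval_prod] using key x
  have conv1 : ∀ f : Fin (I n) → ℂ, (∏ p, (Polynomial.X - Polynomial.C (f p)))
      = ((Finset.univ.val.map f).map fun a => Polynomial.X - Polynomial.C a).prod := by
    intro f
    rw [Multiset.map_map, Finset.prod_eq_multiset_prod]
    rfl
  have hms : Multiset.map (fun p => ((σ n p : ℂ)) ^ 2) Finset.univ.val
      = Multiset.map (fun p => ((σ' n p : ℂ)) ^ 2) Finset.univ.val := by
    have h := congrArg Polynomial.roots hpoly
    rwa [conv1, conv1, Polynomial.roots_multiset_prod_X_sub_C,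
      Polynomial.roots_multiset_prod_X_sub_C] at h
  have hreal : Multiset.map (fun p => (σ n p) ^ 2) Finset.univ.val
      = Multiset.map (fun p => (σ' n p) ^ 2) Finset.univ.val := by
    apply Multiset.map_injective Complex.ofReal_injective
    rw [Multiset.map_map, Multiset.map_map]
    have e1 : ∀ τ : Fin (I n) → ℝ,
        ((fun r : ℝ => (r : ℂ)) ∘ fun p => (τ p) ^ 2) = fun p => ((τ p : ℂ)) ^ 2 := by
      intro τ; funext p; simp [Function.comp, Complex.ofReal_pow]
    rw [e1, e1]
    exact hms
  have hsq : Antitone fun p => (σ n p) ^ 2 :=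
    fun a b hab => pow_le_pow_left₀ (hσnn n b) (hσa n hab) 2
  have hsq' : Antitone fun p => (σ' n p) ^ 2 :=
    fun a b hab => pow_le_pow_left₀ (hσ'nn n b) (hσ'a n hab) 2
  have heq := antitone_eq_of_multiset hsq hsq' hreal
  have := congrFun heq i
  exact (sq_eq_sq₀ (hσnn n i) (hσ'nn n i)).mp this
end
end

section
/- Let Σ be an all-orthogonal tensor and let P⁽ⁿ⁾ be unitary block-diagonal matrices whose blocks correspond exactly to groups of identical mode-n singular values of Σ. Then Σ' = (⊗ₙ P⁽ⁿ⁾†)Σ is again all-orthogonal with the same ordered mode-n singular values for every n. -/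
open Matrix BigOperators

noncomputable section

section Aux

variable {N : ℕ} {I : Fin N → ℕ}

lemma assemble_self (n : Fin N) (i : Fin (I n)) (c : ∀ k : {k : Fin N // k ≠ n}, Fin (I k.1)) :
    assemble n i c n = i := by
  simp [assemble]

lemma assemble_ne (n : Fin N) (i : Fin (I n)) (c : ∀ k : {k : Fin N // k ≠ n}, Fin (I k.1))
    (k : {k : Fin N // k ≠ n}) : assemble n i c k.1 = c k := by
  rw [assemble, dif_neg k.2]

lemma sum_assemble (n : Fin N) (f : (∀ m, Fin (I m)) → ℂ) :
    ∑ y, f y = ∑ a : Fin (I n), ∑ c : ∀ k : {k : Fin N // k ≠ n}, Fin (I k.1),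
      f (assemble n a c) := by
  rw [← (Equiv.piSplitAt n fun m => Fin (I m)).symm.sum_comp f, Fintype.sum_prod_type]
  refine Finset.sum_congr rfl fun a _ => Finset.sum_congr rfl fun c _ => ?_
  congr 1
  funext m
  by_cases h : m = n
  · subst h
    simp [assemble, Equiv.piSplitAt]
  · simp [assemble, Equiv.piSplitAt, h]

lemma prod_split (n : Fin N) (g : Fin N → ℂ) :
    ∏ m, g m = g n * ∏ k : {k : Fin N // k ≠ n}, g k.1 := by
  rw [← Finset.mul_prod_erase _ _ (Finset.mem_univ n)]
  congr 1
  exact Finset.prod_subtype (p := fun k => k ≠ n) (Finset.univ.erase n) (fun x => by simp) g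

end Aux

/-- If `Σ` is all-orthogonal and `P⁽ⁿ⁾` are unitaries that are block-diagonal
compatibly with the multiplicities of the mode-`n` singular values (`P⁽ⁿ⁾_{ij} = 0` whenever
`σᵢ⁽ⁿ⁾ ≠ σⱼ⁽ⁿ⁾`), then `Σ' = (⊗ₙ P⁽ⁿ⁾†)Σ` is again all-orthogonal with the same ordered
mode-`n` singular values. -/
theorem stmt9 {N : ℕ} {I : Fin N → ℕ} (T : (∀ n, Fin (I n)) → ℂ)
    (σ : ∀ n, Fin (I n) → ℝ) (hσ : AllOrth σ T)
    (P : ∀ n, Matrix (Fin (I n)) (Fin (I n)) ℂ)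
    (hP : ∀ n, P n ∈ Matrix.unitaryGroup (Fin (I n)) ℂ)
    (hblock : ∀ (n : Fin N) (i j : Fin (I n)), σ n i ≠ σ n j → P n i j = 0) :
    AllOrth σ (locAct (fun n => (P n)ᴴ) T) := by
  obtain ⟨hmono, hnn, horth⟩ := hσ
  refine ⟨hmono, hnn, fun n i j => ?_⟩
  set U : ∀ m, Matrix (Fin (I m)) (Fin (I m)) ℂ := fun m => (P m)ᴴ with hU
  set Pr : (∀ k : {k : Fin N // k ≠ n}, Fin (I k.1)) →
      (∀ k : {k : Fin N // k ≠ n}, Fin (I k.1)) → ℂ :=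
    fun c d => ∏ k : {k : Fin N // k ≠ n}, U k.1 (c k) (d k) with hPr
  have hslice : ∀ (i : Fin (I n)) (c : ∀ k : {k : Fin N // k ≠ n}, Fin (I k.1)),
      locAct U T (assemble n i c)
        = ∑ a, ∑ d, U n i a * Pr c d * T (assemble n a d) := by
    intro i c
    rw [locAct, sum_assemble n]
    refine Finset.sum_congr rfl fun a _ => Finset.sum_congr rfl fun d _ => ?_
    have hp : (∏ m, U m (assemble n i c m) (assemble n a d m)) = U n i a * Pr c d := by
      rw [prod_split n, assemble_self, assemble_self]
      simp only [hPr]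
      congr 1
      exact Finset.prod_congr rfl fun k _ => by rw [assemble_ne, assemble_ne]
    rw [hp]
  have hdelta : ∀ d e : ∀ k : {k : Fin N // k ≠ n}, Fin (I k.1),
      (∑ c, star (Pr c d) * Pr c e) = if d = e then 1 else 0 := by
    intro d e
    have h1 : ∀ c, star (Pr c d) * Pr c e
        = ∏ k : {k : Fin N // k ≠ n}, star (U k.1 (c k) (d k)) * U k.1 (c k) (e k) := by
      intro c
      simp only [hPr]
      rw [star_prod, ← Finset.prod_mul_distrib]
    simp only [h1]
    rw [← Fintype.piFinset_univ,
      ← Finset.prod_univ_sum (fun _ => Finset.univ)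
        (fun (k : {k : Fin N // k ≠ n}) (y : Fin (I k.1)) =>
          star (U k.1 y (d k)) * U k.1 y (e k))]
    have hfac : ∀ k : {k : Fin N // k ≠ n},
        (∑ x, star (U k.1 x (d k)) * U k.1 x (e k)) = if d k = e k then 1 else 0 := by
      intro k
      have hun : P k.1 * (P k.1)ᴴ = 1 := Matrix.mem_unitaryGroup_iff.mp (hP k.1)
      have h2 : (∑ x, star (U k.1 x (d k)) * U k.1 x (e k))
          = (P k.1 * (P k.1)ᴴ) (d k) (e k) := by
        rw [Matrix.mul_apply]
        refine Finset.sum_congr rfl fun x _ => ?_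
        simp [hU, Matrix.conjTranspose_apply, mul_comm]
      rw [h2, hun, Matrix.one_apply]
    simp only [hfac]
    by_cases h : d = e
    · subst h; simp
    · rw [if_neg h]
      obtain ⟨k, hk⟩ := Function.ne_iff.mp h
      exact Finset.prod_eq_zero (Finset.mem_univ k) (if_neg hk)
  have key : modeInner n (locAct U T) (locAct U T) i j
      = ∑ a, star (U n i a) * U n j a * ((σ n a : ℂ)) ^ 2 := by
    rw [modeInner]
    have step1 : ∀ c, star (locAct U T (assemble n i c)) * locAct U T (assemble n j c)
        = ∑ a, ∑ b, ∑ d, ∑ e, (star (U n i a) * U n j b)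
            * ((star (Pr c d) * Pr c e) * (star (T (assemble n a d)) * T (assemble n b e))) := by
      intro c
      rw [hslice, hslice]
      rw [star_sum, Finset.sum_mul_sum]
      refine Finset.sum_congr rfl fun a _ => Finset.sum_congr rfl fun b _ => ?_
      rw [star_sum, Finset.sum_mul_sum]
      refine Finset.sum_congr rfl fun d _ => Finset.sum_congr rfl fun e _ => ?_
      simp only [star_mul']
      ring
    calc (∑ c, star (locAct U T (assemble n i c)) * locAct U T (assemble n j c))
        = ∑ c, ∑ a, ∑ b, ∑ d, ∑ e, (star (U n i a) * U n j b)
            * ((star (Pr c d) * Pr c e) * (star (T (assemble n a d)) * T (assemble n b e))) :=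
          Finset.sum_congr rfl fun c _ => step1 c
      _ = ∑ a, ∑ b, ∑ d, ∑ e, ∑ c, (star (U n i a) * U n j b)
            * ((star (Pr c d) * Pr c e) * (star (T (assemble n a d)) * T (assemble n b e))) := by
          rw [Finset.sum_comm]
          refine Finset.sum_congr rfl fun a _ => ?_
          rw [Finset.sum_comm]
          refine Finset.sum_congr rfl fun b _ => ?_
          rw [Finset.sum_comm]
          refine Finset.sum_congr rfl fun d _ => ?_
          rw [Finset.sum_comm]
      _ = ∑ a, ∑ b, ∑ d, ∑ e, (star (U n i a) * U n j b)
            * ((if d = e then (1 : ℂ) else 0)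
              * (star (T (assemble n a d)) * T (assemble n b e))) := by
          refine Finset.sum_congr rfl fun a _ => Finset.sum_congr rfl fun b _ =>
            Finset.sum_congr rfl fun d _ => Finset.sum_congr rfl fun e _ => ?_
          rw [← Finset.mul_sum, ← Finset.sum_mul, hdelta]
      _ = ∑ a, ∑ b, ∑ d, (star (U n i a) * U n j b)
            * (star (T (assemble n a d)) * T (assemble n b d)) := by
          refine Finset.sum_congr rfl fun a _ => Finset.sum_congr rfl fun b _ =>
            Finset.sum_congr rfl fun d _ => ?_
          simp [mul_ite, ite_mul, mul_zero, zero_mul, Finset.sum_ite_eq]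
      _ = ∑ a, ∑ b, (star (U n i a) * U n j b) * modeInner n T T a b := by
          refine Finset.sum_congr rfl fun a _ => Finset.sum_congr rfl fun b _ => ?_
          rw [← Finset.mul_sum]
          rfl
      _ = ∑ a, star (U n i a) * U n j a * ((σ n a : ℂ)) ^ 2 := by
          refine Finset.sum_congr rfl fun a _ => ?_
          simp only [horth]
          simp [mul_ite, mul_zero, Finset.sum_ite_eq]
  rw [key]
  have hUni : ∀ a, star (U n i a) = P n a i := fun a => by
    simp [hU, Matrix.conjTranspose_apply]
  have hUja : ∀ a, U n j a = star (P n a j) := fun a => by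
    simp [hU, Matrix.conjTranspose_apply]
  have step : (∑ a, star (U n i a) * U n j a * ((σ n a : ℂ)) ^ 2)
      = ((σ n i : ℂ)) ^ 2 * ∑ a, star (P n a j) * P n a i := by
    rw [Finset.mul_sum]
    refine Finset.sum_congr rfl fun a _ => ?_
    rw [hUni, hUja]
    by_cases hp : P n a i = 0
    · rw [hp]; ring
    · have hs : σ n a = σ n i := by
        by_contra hne
        exact hp (hblock n a i hne)
      rw [hs]; ring
  rw [step]
  have hone : (∑ a, star (P n a j) * P n a i) = (star (P n) * P n) j i := by
    rw [Matrix.mul_apply]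
    exact Finset.sum_congr rfl fun a _ => by rw [Matrix.star_apply]
  rw [hone, Matrix.mem_unitaryGroup_iff'.mp (hP n), Matrix.one_apply]
  by_cases h : i = j
  · subst h; simp
  · rw [if_neg h, if_neg (Ne.symm h), mul_zero]
end
end

section
/- Let Σ be an all-orthogonal core tensor with strictly positive, pairwise distinct mode-n singular values for each mode n, and suppose Σ' = (⊗ₙ V⁽ⁿ⁾)Σ is also all-orthogonal with ordered mode-n singular values, where V⁽ⁿ⁾ are unitary. Then each V⁽ⁿ⁾ is a diagonal unitary matrix. -/
open Matrix BigOperators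

noncomputable section

namespace Stmt18Aux

variable {N : ℕ} {I : Fin N → ℕ}

lemma assemble_self (n : Fin N) (i : Fin (I n)) (c : ∀ k : {k : Fin N // k ≠ n}, Fin (I k.1)) :
    assemble n i c n = i := by simp [assemble]

lemma assemble_ne (n : Fin N) (i : Fin (I n)) (c : ∀ k : {k : Fin N // k ≠ n}, Fin (I k.1))
    (m : Fin N) (h : m ≠ n) : assemble n i c m = c ⟨m, h⟩ := dif_neg h

def modeEquiv (n : Fin N) :
    (Fin (I n) × (∀ k : {k : Fin N // k ≠ n}, Fin (I k.1))) ≃ (∀ m, Fin (I m)) where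
  toFun p := assemble n p.1 p.2
  invFun y := (y n, fun k => y k.1)
  left_inv p := by
    obtain ⟨i, c⟩ := p
    dsimp only
    exact Prod.ext (assemble_self n i c) (funext fun k => assemble_ne n i c k.1 k.2)
  right_inv y := by
    funext m
    by_cases h : m = n
    · subst h; exact assemble_self m (y m) _
    · exact assemble_ne n (y n) _ m h

lemma sum_assemble (n : Fin N) (f : (∀ m, Fin (I m)) → ℂ) :
    ∑ y, f y = ∑ k : Fin (I n), ∑ d, f (assemble n k d) := by
  rw [← Equiv.sum_comp (modeEquiv n) f, Fintype.sum_prod_type]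
  rfl

lemma prod_assemble₂ (n : Fin N) (G : ∀ m, Fin (I m) → Fin (I m) → ℂ)
    (i k : Fin (I n)) (c d : ∀ p : {m : Fin N // m ≠ n}, Fin (I p.1)) :
    (∏ m, G m (assemble n i c m) (assemble n k d m)) =
      G n i k * ∏ p : {m : Fin N // m ≠ n}, G p.1 (c p) (d p) := by
  rw [← Finset.mul_prod_erase Finset.univ _ (Finset.mem_univ n)]
  congr 1
  · rw [assemble_self, assemble_self]
  · rw [Finset.prod_subtype (Finset.univ.erase n)
      (p := fun m => m ≠ n) (by simp) (fun m => G m (assemble n i c m) (assemble n k d m))]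
    refine Finset.prod_congr rfl fun p _ => ?_
    rw [assemble_ne n i c p.1 p.2, assemble_ne n k d p.1 p.2]

/-- Columns of a unitary matrix are orthonormal. -/
lemma col_orth (M : Matrix (Fin m) (Fin m) ℂ) (hM : M ∈ Matrix.unitaryGroup (Fin m) ℂ)
    (d e : Fin m) : ∑ c, star (M c d) * M c e = if d = e then 1 else 0 := by
  have h := Matrix.ext_iff.mpr hM.1 d e
  simpa [Matrix.mul_apply, Matrix.one_apply, Matrix.conjTranspose_apply] using h

/-- Generic bilinear expansion of a sum of products. -/
lemma helper1 {α β γ : Type*} [Fintype α] [Fintype β] [Fintype γ]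
    (u : β → ℂ) (v : γ → ℂ) (W : α → β → ℂ) (W' : α → γ → ℂ) :
    ∑ c, star (∑ k, u k * W c k) * (∑ l, v l * W' c l)
      = ∑ k, ∑ l, (star (u k) * v l) * (∑ c, star (W c k) * W' c l) := by
  have h : ∀ c, star (∑ k, u k * W c k) * (∑ l, v l * W' c l)
      = ∑ k, ∑ l, (star (u k) * v l) * (star (W c k) * W' c l) := by
    intro c
    rw [star_sum, Finset.sum_mul_sum]
    exact Finset.sum_congr rfl fun k _ => Finset.sum_congr rfl fun l _ => by
      rw [star_mul']; ring
  simp_rw [h]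
  rw [Finset.sum_comm]
  refine Finset.sum_congr rfl fun k _ => ?_
  rw [Finset.sum_comm]
  refine Finset.sum_congr rfl fun l _ => ?_
  rw [Finset.mul_sum]

lemma delta_prod (V : ∀ n, Matrix (Fin (I n)) (Fin (I n)) ℂ)
    (hV : ∀ n, V n ∈ Matrix.unitaryGroup (Fin (I n)) ℂ) (n : Fin N)
    (d e : ∀ p : {m : Fin N // m ≠ n}, Fin (I p.1)) :
    (∑ c : ∀ p : {m : Fin N // m ≠ n}, Fin (I p.1),
        star (∏ p, V p.1 (c p) (d p)) * ∏ p, V p.1 (c p) (e p))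
      = if d = e then 1 else 0 := by
  have h1 : ∀ c : ∀ p : {m : Fin N // m ≠ n}, Fin (I p.1),
      star (∏ p, V p.1 (c p) (d p)) * ∏ p, V p.1 (c p) (e p)
        = ∏ p, (star (V p.1 (c p) (d p)) * V p.1 (c p) (e p)) := by
    intro c
    rw [star_prod, ← Finset.prod_mul_distrib]
  simp_rw [h1]
  rw [show (Finset.univ : Finset (∀ p : {m : Fin N // m ≠ n}, Fin (I p.1)))
      = Fintype.piFinset (fun _ => Finset.univ) from (Fintype.piFinset_univ).symm,
    (Finset.prod_univ_sum (fun _ : {m : Fin N // m ≠ n} => (Finset.univ : Finset _))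
      (fun p cp => star (V p.1 cp (d p)) * V p.1 cp (e p))).symm]
  by_cases h : d = e
  · subst h
    rw [if_pos rfl]
    refine Finset.prod_eq_one fun p _ => ?_
    rw [col_orth (V p.1) (hV p.1), if_pos rfl]
  · rw [if_neg h]
    obtain ⟨p, hp⟩ : ∃ p, d p ≠ e p := by
      by_contra hc; push_neg at hc; exact h (funext hc)
    exact Finset.prod_eq_zero (Finset.mem_univ p)
      (by rw [col_orth (V p.1) (hV p.1), if_neg hp])

lemma keyEq (T : (∀ n, Fin (I n)) → ℂ) (V : ∀ n, Matrix (Fin (I n)) (Fin (I n)) ℂ)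
    (hV : ∀ n, V n ∈ Matrix.unitaryGroup (Fin (I n)) ℂ) (n : Fin N) (i j : Fin (I n)) :
    modeInner n (locAct V T) (locAct V T) i j
      = ∑ k, ∑ l, (star (V n i k) * V n j l) * modeInner n T T k l := by
  have slice : ∀ (i : Fin (I n)) (c : ∀ p : {m : Fin N // m ≠ n}, Fin (I p.1)),
      locAct V T (assemble n i c) =
        ∑ k, V n i k *
          (∑ d, T (assemble n k d) * ∏ p : {m : Fin N // m ≠ n}, V p.1 (c p) (d p)) := by
    intro i c
    unfold locAct
    rw [sum_assemble n (fun y => (∏ m, V m (assemble n i c m) (y m)) * T y)]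
    refine Finset.sum_congr rfl fun k _ => ?_
    rw [Finset.mul_sum]
    refine Finset.sum_congr rfl fun d _ => ?_
    rw [show (∏ m, V m (assemble n i c m) (assemble n k d m)) = V n i k * ∏ p : {m : Fin N // m ≠ n}, V p.1 (c p) (d p) from prod_assemble₂ n (fun m => V m) i k c d]; ring
  unfold modeInner
  simp_rw [slice]
  rw [helper1]
  refine Finset.sum_congr rfl fun k _ => Finset.sum_congr rfl fun l _ => ?_
  congr 1
  rw [helper1]
  have : ∀ d e : ∀ p : {m : Fin N // m ≠ n}, Fin (I p.1),
      (∑ c : ∀ p : {m : Fin N // m ≠ n}, Fin (I p.1),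
        star (∏ p, V p.1 (c p) (d p)) * ∏ p, V p.1 (c p) (e p))
      = if d = e then 1 else 0 := delta_prod V hV n
  simp_rw [this]
  simp [mul_ite, Finset.sum_ite_eq, modeInner]

end Stmt18Aux

open Stmt18Aux in
/-- If `Σ` is all-orthogonal with strictly positive, pairwise distinct mode-`n`
singular values, and `Σ' = (⊗ₙ V⁽ⁿ⁾)Σ` is also all-orthogonal with ordered mode-`n` singular
values for unitaries `V⁽ⁿ⁾`, then each `V⁽ⁿ⁾` is diagonal. -/
theorem stmt18 {N : ℕ} {I : Fin N → ℕ} (T : (∀ n, Fin (I n)) → ℂ)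
    (σ : ∀ n, Fin (I n) → ℝ) (hσ : AllOrth σ T)
    (hstrict : ∀ n, StrictAnti (σ n)) (hpos : ∀ n i, 0 < σ n i)
    (V : ∀ n, Matrix (Fin (I n)) (Fin (I n)) ℂ)
    (hV : ∀ n, V n ∈ Matrix.unitaryGroup (Fin (I n)) ℂ)
    (σ' : ∀ n, Fin (I n) → ℝ) (hσ' : AllOrth σ' (locAct V T)) :
    ∀ n : Fin N, ∃ d : Fin (I n) → ℂ, V n = Matrix.diagonal d := by
  intro n
  set M : Matrix (Fin (I n)) (Fin (I n)) ℂ := V n with hM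
  set a : Fin (I n) → ℂ := fun k => ((σ n k : ℂ)) ^ 2 with ha
  set b : Fin (I n) → ℂ := fun i => ((σ' n i : ℂ)) ^ 2 with hb
  -- the key identity
  have hE' : ∀ i j : Fin (I n), ∑ k, star (M i k) * M j k * a k = if i = j then b i else 0 := by
    intro i j
    rw [show (if i = j then b i else 0) = modeInner n (locAct V T) (locAct V T) i j from
      (hσ'.2.2 n i j).symm, keyEq T V hV n i j]
    refine Finset.sum_congr rfl fun k _ => ?_
    simp only [hσ.2.2 n, mul_ite, mul_zero, Finset.sum_ite_eq, Finset.mem_univ, if_true, ha, hM]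
  -- row orthonormality (from M * star M = 1, via star of col_orth)
  have hrow : ∀ l k : Fin (I n), ∑ i, M i l * star (M i k) = if l = k then 1 else 0 := by
    intro l k
    have h := col_orth M (hV n) l k
    calc ∑ i, M i l * star (M i k) = star (∑ i, star (M i l) * M i k) := by
          rw [star_sum]
          exact Finset.sum_congr rfl fun i _ => by rw [star_mul', star_star]
      _ = if l = k then 1 else 0 := by rw [h]; split <;> simp
  -- intertwining: M j l * a l = M j l * b j
  have hD : ∀ j l : Fin (I n), M j l * a l = M j l * b j := by
    intro j l
    have e1 : ∑ i, M i l * (∑ k, star (M i k) * M j k * a k) = M j l * b j := by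
      simp_rw [hE']
      simp [mul_ite, Finset.sum_ite_eq']
    have e2 : ∑ i, M i l * (∑ k, star (M i k) * M j k * a k) = M j l * a l := by
      simp_rw [Finset.mul_sum]
      rw [Finset.sum_comm]
      have h3 : ∀ k, ∑ i, M i l * (star (M i k) * M j k * a k)
          = (if l = k then 1 else 0) * (M j k * a k) := by
        intro k
        rw [← hrow l k, Finset.sum_mul]
        exact Finset.sum_congr rfl fun i _ => by ring
      simp_rw [h3]
      simp [ite_mul, Finset.sum_ite_eq]
    exact e2.symm.trans e1
  have href : ∀ j l : Fin (I n), M j l ≠ 0 → a l = b j :=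
    fun j l h => mul_left_cancel₀ h (hD j l)
  -- injectivity of a
  have ha_inj : Function.Injective a := by
    intro k k' h
    have h2 : (σ n k) ^ 2 = (σ n k') ^ 2 := by
      have := h
      simp only [ha] at this
      exact_mod_cast this
    exact (hstrict n).injective ((sq_eq_sq₀ (hpos n k).le (hpos n k').le).mp h2)
  -- each row has a nonzero entry
  have rowEx : ∀ j : Fin (I n), ∃ l, M j l ≠ 0 := by
    intro j
    by_contra hc
    push_neg at hc
    have hc' : ∀ l, V n j l = 0 := hc
    have h := Matrix.ext_iff.mpr (hV n).2 j j
    simp [Matrix.mul_apply, Matrix.one_apply, Matrix.conjTranspose_apply, hc'] at h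
  have colEx : ∀ l : Fin (I n), ∃ j, M j l ≠ 0 := by
    intro l
    by_contra hc
    push_neg at hc
    have h := col_orth M (hV n) l l
    simp [hc] at h
  choose f hf using rowEx
  have uniq : ∀ j l, M j l ≠ 0 → l = f j := by
    intro j l h
    exact ha_inj ((href j l h).trans (href j (f j) (hf j)).symm)
  have hsurj : Function.Surjective f := by
    intro l
    obtain ⟨j, hj⟩ := colEx l
    exact ⟨j, (uniq j l hj).symm⟩
  have hinj : Function.Injective f := Finite.injective_iff_surjective.mpr hsurj
  -- b j = a (f j) at the real level
  have hreal : ∀ j, (σ' n j) ^ 2 = (σ n (f j)) ^ 2 := by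
    intro j
    have := (href j (f j) (hf j)).symm
    simp only [ha, hb] at this
    exact_mod_cast this
  have hmono : Monotone f := by
    intro i i' hii
    by_contra hc
    push_neg at hc
    have h1 : (σ n (f i)) ^ 2 < (σ n (f i')) ^ 2 :=
      pow_lt_pow_left₀ (hstrict n hc) (hpos n (f i)).le (two_ne_zero)
    have h2 : (σ' n i') ^ 2 ≤ (σ' n i) ^ 2 :=
      pow_le_pow_left₀ (hσ'.2.1 n i') (hσ'.1 n hii) 2
    rw [hreal i, hreal i'] at h2
    exact absurd h2 (not_le.mpr h1)
  have hid : f = id := by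
    have hs : StrictMono f := hmono.strictMono_of_injective hinj
    haveI hwf : WellFoundedLT (Fin (I n)) := inferInstance
    exact (@StrictMono.range_inj (Fin (I n)) (Fin (I n)) inferInstance inferInstance hwf f id
        hs strictMono_id).mp
      (by rw [Set.range_id]; exact Set.range_eq_univ.mpr hsurj)
  refine ⟨fun i => M i i, Matrix.ext fun i j => ?_⟩
  by_cases h : i = j
  · subst h; simp [Matrix.diagonal]
  · rw [Matrix.diagonal_apply_ne _ h]
    by_contra hne
    exact h ((uniq i j hne).trans (congrFun hid i)).symm
end
end
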